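/- Define, for η ∈ [0,1), cost_sub(D, D̂) := cost_add(D̂, D), i.e., the subtractive-noise cost. Then cost_sub with budget η is 1/(1−η)-local: for any distributions D, E, D̂ on a finite domain X with cost_sub(D, D̂) ≤ η, there exists Ê with cost_sub(E, Ê) ≤ cost_sub(D, D̂) and dist_TV(D̂, Ê) ≤ (1/(1−η))·dist_TV(D, E). -/

import Mathlib

open Finset

def IsPMF {X : Type*} [Fintype X] (D : X → ℝ) : Prop :=
  (∀ x, 0 ≤ D x) ∧ ∑ x, D x = 1

noncomputable def tvDist {X : Type*} [Fintype X] (D D' : X → ℝ) : ℝ :=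
  (∑ x, |D x - D' x|) / 2

/-- The additive-noise cost: the least `η ∈ [0,1]` such that `D̂ = (1−η)D + ηE` for some
distribution `E` (and `∞` if no such `η` exists). -/
noncomputable def costAdd {X : Type*} [Fintype X] (D Dh : X → ℝ) : ENNReal :=
  sInf {η : ENNReal | ∃ e : ℝ, η = ENNReal.ofReal e ∧ 0 ≤ e ∧ e ≤ 1 ∧
    ∃ E : X → ℝ, IsPMF E ∧ ∀ x, Dh x = (1 - e) * D x + e * E x}

/-- The subtractive-noise cost: `cost_sub(D, D̂) = cost_add(D̂, D)`. -/
noncomputable def costSub {X : Type*} [Fintype X] (D Dh : X → ℝ) : ENNReal :=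
  costAdd Dh D

set_option maxHeartbeats 1000000 in
/-- The subtractive-noise cost with budget `η ∈ [0,1)` is `1/(1−η)`-local: for any
distributions `D, E, D̂` with `cost_sub(D, D̂) ≤ η`, there exists `Ê` with
`cost_sub(E, Ê) ≤ cost_sub(D, D̂)` and `dist_TV(D̂, Ê) ≤ (1/(1−η))·dist_TV(D, E)`. -/
theorem stmt19 {X : Type*} [Fintype X] (η : ℝ) (hη0 : 0 ≤ η) (hη1 : η < 1)
    (D E Dh : X → ℝ) (hD : IsPMF D) (hE : IsPMF E) (hDh : IsPMF Dh)
    (hcost : costSub D Dh ≤ ENNReal.ofReal η) :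
    ∃ Eh : X → ℝ, IsPMF Eh ∧ costSub E Eh ≤ costSub D Dh ∧
      tvDist Dh Eh ≤ (1 / (1 - η)) * tvDist D E := by
  classical
  obtain ⟨hD0, hD1⟩ := hD
  obtain ⟨hE0, hE1⟩ := hE
  obtain ⟨hDh0, hDh1⟩ := hDh
  -- the feasible set of removal fractions
  set S : Set ℝ := {e | 0 ≤ e ∧ e ≤ 1 ∧ ∀ x, (1 - e) * Dh x ≤ D x} with hSdef
  have hS1 : (1 : ℝ) ∈ S := ⟨zero_le_one, le_refl 1, fun x => by simpa using hD0 x⟩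
  have hSne : S.Nonempty := ⟨1, hS1⟩
  have hSbdd : BddBelow S := ⟨0, fun e he => he.1⟩
  have hSclosed : IsClosed S := by
    have : S = Set.Ici (0:ℝ) ∩ (Set.Iic 1 ∩ ⋂ x, {e : ℝ | (1 - e) * Dh x ≤ D x}) := by
      ext e; simp [hSdef, Set.mem_iInter, and_assoc]
    rw [this]
    refine isClosed_Ici.inter (isClosed_Iic.inter (isClosed_iInter fun x => ?_))
    exact isClosed_le (by continuity) continuous_const
  set e := sInf S with hedef
  have heS : e ∈ S := hSclosed.csInf_mem hSne hSbdd
  obtain ⟨he0, he1, hefeas⟩ := heS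
  -- `ofReal e` is a lower bound for the cost
  have hle : ENNReal.ofReal e ≤ costSub D Dh := by
    refine le_sInf fun b hb => ?_
    obtain ⟨e', rfl, he'0, he'1, F, ⟨hF0, hFs⟩, hFeq⟩ := hb
    have he'S : e' ∈ S := by
      refine ⟨he'0, he'1, fun x => ?_⟩
      have := hFeq x
      nlinarith [hF0 x]
    exact ENNReal.ofReal_le_ofReal (csInf_le hSbdd he'S)
  have heη : e ≤ η := by
    have := hle.trans hcost
    rwa [ENNReal.ofReal_le_ofReal_iff hη0] at this
  have h1e : (0:ℝ) < 1 - e := by linarith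
  have h1η : (0:ℝ) < 1 - η := by linarith
  -- the removed mass G from D, and the target T, clipped mass M
  set G : X → ℝ := fun x => D x - (1 - e) * Dh x with hGdef
  have hG0 : ∀ x, 0 ≤ G x := fun x => by
    have := hefeas x; simp [hGdef]; linarith
  have hGleD : ∀ x, G x ≤ D x := fun x => by
    have := mul_nonneg h1e.le (hDh0 x); simp [hGdef]; linarith
  have hGsum : ∑ x, G x = e := by
    simp [hGdef, Finset.sum_sub_distrib, ← Finset.mul_sum, hD1, hDh1]
  set T : X → ℝ := fun x => G x + E x - D x with hTdef
  have hTsum : ∑ x, T x = e := by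
    simp [hTdef, Finset.sum_sub_distrib, Finset.sum_add_distrib, hGsum, hE1, hD1]
  set M : X → ℝ := fun x => max (T x) 0 with hMdef
  have hM0 : ∀ x, 0 ≤ M x := fun x => le_max_right _ _
  have hMleE : ∀ x, M x ≤ E x := fun x => by
    have h1 : T x ≤ E x := by have := hGleD x; simp [hTdef]; linarith
    exact max_le h1 (hE0 x)
  set ε := ∑ x, M x with hεdef
  have hε0 : 0 ≤ ε := Finset.sum_nonneg fun x _ => hM0 x
  have heε : e ≤ ε := by
    rw [← hTsum, hεdef]
    exact Finset.sum_le_sum fun x _ => le_max_left _ _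
  set c : ℝ := if ε = 0 then 0 else e / ε with hcdef
  have hc0 : 0 ≤ c := by
    rw [hcdef]; split
    · exact le_refl 0
    · exact div_nonneg he0 hε0
  have hc1 : c ≤ 1 := by
    rw [hcdef]; split
    · exact zero_le_one
    · rename_i h
      exact div_le_one_of_le₀ heε hε0
  have hcε : c * ε = e := by
    rw [hcdef]; split
    · rename_i h; rw [h] at heε; linarith
    · rename_i h; field_simp
  have hce0 : e = 0 → c = 0 := by
    intro h; rw [hcdef]; split
    · rfl
    · rw [h]; simp
  -- the new distribution
  set Eh : X → ℝ := fun x => (E x - c * M x) / (1 - e) with hEhdef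
  have hcMleE : ∀ x, c * M x ≤ E x := fun x =>
    le_trans (by nlinarith [hM0 x, hMleE x]) (hMleE x)
  have hEh0 : ∀ x, 0 ≤ Eh x := fun x =>
    div_nonneg (by linarith [hcMleE x]) h1e.le
  have hEhsum : ∑ x, Eh x = 1 := by
    rw [hEhdef]
    rw [← Finset.sum_div]
    rw [Finset.sum_sub_distrib, ← Finset.mul_sum, ← hεdef, hE1, hcε]
    field_simp
  have hEhPMF : IsPMF Eh := ⟨hEh0, hEhsum⟩
  refine ⟨Eh, hEhPMF, ?_, ?_⟩
  · -- cost bound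
    refine le_trans ?_ hle
    refine sInf_le ?_
    by_cases he : e = 0
    · refine ⟨e, rfl, he0, he1, E, ⟨hE0, hE1⟩, fun x => ?_⟩
      have hc : c = 0 := hce0 he
      simp [hEhdef, hc, he]
    · refine ⟨e, rfl, he0, he1, fun x => c * M x / e, ⟨fun x => div_nonneg (mul_nonneg hc0 (hM0 x)) he0, ?_⟩, fun x => ?_⟩
      · rw [← Finset.sum_div, ← Finset.mul_sum, ← hεdef, hcε]
        field_simp
      · rw [hEhdef]
        field_simp
        ring
  · -- TV bound
    have hDh : ∀ x, Dh x = (D x - G x) / (1 - e) := fun x => by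
      rw [hGdef]; field_simp; ring
    have hpt : ∀ x, |Dh x - Eh x| = ((1 - c) * M x + max (-T x) 0) / (1 - e) := by
      intro x
      have hnum : D x - G x - (E x - c * M x) = c * M x - T x := by
        rw [hTdef]; ring
      have hnum2 : |c * M x - T x| = (1 - c) * M x + max (-T x) 0 := by
        rcases le_or_gt 0 (T x) with h | h
        · have hMx : M x = T x := max_eq_left h
          have hmax : max (-T x) 0 = 0 := max_eq_right (by linarith)
          rw [hMx, hmax, abs_of_nonpos (by nlinarith)]
          ring
        · have hMx : M x = 0 := max_eq_right h.le
          have hmax : max (-T x) 0 = -T x := max_eq_left (by linarith)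
          rw [hMx, hmax, mul_zero, zero_sub, abs_of_pos (by linarith)]
          ring
      rw [hDh x, hEhdef, div_sub_div_same, hnum, abs_div, abs_of_pos h1e, hnum2]
    set N := ∑ x, max (-T x) 0 with hNdef
    have hsumabs : ∑ x, |Dh x - Eh x| = ((1 - c) * ε + N) / (1 - e) := by
      rw [Finset.sum_congr rfl fun x _ => hpt x, ← Finset.sum_div]
      congr 1
      rw [Finset.sum_add_distrib, ← Finset.mul_sum, ← hεdef, hNdef]
    have hNval : N = ε - e := by
      have key : ∀ x, max (T x) 0 - max (-T x) 0 = T x := fun x => by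
        rcases le_or_gt 0 (T x) with h | h
        · rw [max_eq_left h, max_eq_right (by linarith)]; ring
        · rw [max_eq_right h.le, max_eq_left (by linarith)]; ring
      have : ε - N = e := by
        rw [hεdef, hNdef, ← Finset.sum_sub_distrib,
          Finset.sum_congr rfl fun x _ => key x, hTsum]
      linarith
    -- N ≤ tvDist D E
    have hhalf : ∑ x, max (D x - E x) 0 = (∑ x, |D x - E x|) / 2 := by
      have key : ∀ x, max (D x - E x) 0 = ((D x - E x) + |D x - E x|) / 2 := fun x => by
        rcases le_or_gt 0 (D x - E x) with h | h
        · rw [max_eq_left h, abs_of_nonneg h]; ring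
        · rw [max_eq_right h.le, abs_of_neg h]; ring
      rw [Finset.sum_congr rfl fun x _ => key x, ← Finset.sum_div,
        Finset.sum_add_distrib, Finset.sum_sub_distrib, hD1, hE1]
      ring
    have hNle : N ≤ (∑ x, |D x - E x|) / 2 := by
      rw [← hhalf, hNdef]
      refine Finset.sum_le_sum fun x _ => ?_
      have h1 : -T x ≤ D x - E x := by
        have := hG0 x; simp [hTdef]; linarith
      exact max_le_max h1 (le_refl 0)
    -- put it together
    have habs0 : 0 ≤ ∑ x, |D x - E x| := Finset.sum_nonneg fun x _ => abs_nonneg _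
    have step1 : tvDist Dh Eh = N / (1 - e) := by
      rw [tvDist, hsumabs, hNval]
      have : (1 - c) * ε = ε - e := by nlinarith
      rw [this]
      field_simp
      ring
    have hN0 : 0 ≤ N := Finset.sum_nonneg fun x _ => le_max_right _ _
    rw [step1, tvDist]
    calc N / (1 - e) ≤ ((∑ x, |D x - E x|) / 2) / (1 - η) :=
        div_le_div₀ (div_nonneg habs0 (by norm_num)) hNle h1η (by linarith)
      _ = 1 / (1 - η) * ((∑ x, |D x - E x|) / 2) := (one_div_mul_eq_div _ _).symm
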